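/- Let 𝕂 = ℝ or ℂ and let ℓ₂² = 𝕂² be the two-dimensional Hilbert space. The pair (ℓ₂², 𝕂) fails the bilinear symmetric Bishop–Phelps–Bollobás point property: there exists ε>0 such that for every η>0 there exist a continuous symmetric bilinear form A on ℓ₂² with ‖A‖=1 and unit vectors x, y with |A(x,y)| > 1−η, such that every continuous symmetric bilinear form B with ‖B‖=1 and |B(x,y)|=1 satisfies ‖B−A‖ ≥ ε. -/

import Mathlib

set_option linter.unusedSectionVars false
set_option maxHeartbeats 1000000

noncomputable section BPBAux

namespace BPBAux

variable {𝕜 : Type*} [RCLike 𝕜]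

abbrev CMM2 (𝕜 : Type*) [RCLike 𝕜] :=
  ContinuousMultilinearMap 𝕜 (fun _ : Fin 2 => EuclideanSpace 𝕜 (Fin 2)) 𝕜

def vec2 (a b : 𝕜) : EuclideanSpace 𝕜 (Fin 2) := WithLp.toLp 2 ![a, b]

lemma vec2_apply0 (a b : 𝕜) : vec2 a b 0 = a := rfl
lemma vec2_apply1 (a b : 𝕜) : vec2 a b 1 = b := rfl

lemma norm_vec2 (a b : 𝕜) : ‖vec2 a b‖ = Real.sqrt (‖a‖^2 + ‖b‖^2) := by
  rw [EuclideanSpace.norm_eq]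
  simp [vec2, Fin.sum_univ_two]

lemma upd0 (u v w : EuclideanSpace 𝕜 (Fin 2)) :
    Function.update ![u, v] 0 w = ![w, v] := by
  funext i; fin_cases i <;> simp [Function.update]

lemma upd1 (u v w : EuclideanSpace 𝕜 (Fin 2)) :
    Function.update ![u, v] 1 w = ![u, w] := by
  funext i; fin_cases i <;> simp [Function.update]

lemma left_comb (B : CMM2 𝕜) (a b : 𝕜) (w z v : EuclideanSpace 𝕜 (Fin 2)) :
    B ![a • w + b • z, v] = a * B ![w, v] + b * B ![z, v] := by
  have h1 := B.map_update_add ![w, v] 0 (a • w) (b • z)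
  have h2 := B.map_update_smul ![w, v] 0 a w
  have h3 := B.map_update_smul ![z, v] 0 b z
  simp only [upd0, smul_eq_mul] at h1 h2 h3
  rw [h1, h2, h3]

lemma right_comb (B : CMM2 𝕜) (a b : 𝕜) (u w z : EuclideanSpace 𝕜 (Fin 2)) :
    B ![u, a • w + b • z] = a * B ![u, w] + b * B ![u, z] := by
  have h1 := B.map_update_add ![u, w] 1 (a • w) (b • z)
  have h2 := B.map_update_smul ![u, w] 1 a w
  have h3 := B.map_update_smul ![u, z] 1 b z
  simp only [upd1, smul_eq_mul] at h1 h2 h3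
  rw [h1, h2, h3]

lemma vec2_decomp (u : EuclideanSpace 𝕜 (Fin 2)) :
    u = u 0 • vec2 1 0 + u 1 • vec2 0 1 := by
  ext i; fin_cases i <;> simp [vec2]

lemma map_pair (B : CMM2 𝕜) (u v : EuclideanSpace 𝕜 (Fin 2)) :
    B ![u, v] = u 0 * v 0 * B ![vec2 1 0, vec2 1 0] + u 0 * v 1 * B ![vec2 1 0, vec2 0 1]
      + u 1 * v 0 * B ![vec2 0 1, vec2 1 0] + u 1 * v 1 * B ![vec2 0 1, vec2 0 1] := by
  conv_lhs => rw [vec2_decomp u, vec2_decomp v]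
  rw [left_comb, right_comb, right_comb]
  ring

def projCMM (i : Fin 2) : CMM2 𝕜 :=
  (ContinuousMultilinearMap.mkPiAlgebraFin 𝕜 2 𝕜).compContinuousLinearMap
    (fun _ => EuclideanSpace.proj i)

lemma projCMM_apply (i : Fin 2) (m : Fin 2 → EuclideanSpace 𝕜 (Fin 2)) :
    projCMM i m = m 0 i * m 1 i := by
  simp [projCMM, ContinuousMultilinearMap.compContinuousLinearMap_apply,
    ContinuousMultilinearMap.mkPiAlgebraFin_apply, List.ofFn_succ]

/-- the inner-product-like form -/
def Aform (𝕜 : Type*) [RCLike 𝕜] : CMM2 𝕜 := projCMM 0 + projCMM 1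

lemma Aform_apply (m : Fin 2 → EuclideanSpace 𝕜 (Fin 2)) :
    Aform 𝕜 m = m 0 0 * m 1 0 + m 0 1 * m 1 1 := by
  simp [Aform, projCMM_apply]

lemma cs2 (a b c d : 𝕜) :
    ‖a * c + b * d‖ ≤ Real.sqrt (‖a‖^2 + ‖b‖^2) * Real.sqrt (‖c‖^2 + ‖d‖^2) := by
  have h1 : ‖a * c + b * d‖ ≤ ‖a‖ * ‖c‖ + ‖b‖ * ‖d‖ := by
    calc ‖a * c + b * d‖ ≤ ‖a * c‖ + ‖b * d‖ := norm_add_le _ _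
    _ = ‖a‖ * ‖c‖ + ‖b‖ * ‖d‖ := by rw [norm_mul, norm_mul]
  refine h1.trans ?_
  rw [← Real.sqrt_mul (by positivity)]
  rw [← Real.sqrt_sq (by positivity : (0:ℝ) ≤ ‖a‖ * ‖c‖ + ‖b‖ * ‖d‖)]
  refine Real.sqrt_le_sqrt ?_
  nlinarith [sq_nonneg (‖a‖*‖d‖ - ‖b‖*‖c‖), norm_nonneg a, norm_nonneg b, norm_nonneg c,
    norm_nonneg d]

lemma prod_norm_pair (u v : EuclideanSpace 𝕜 (Fin 2)) :
    (∏ i : Fin 2, ‖(![u, v] : Fin 2 → EuclideanSpace 𝕜 (Fin 2)) i‖) = ‖u‖ * ‖v‖ := by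
  simp [Fin.prod_univ_two]

lemma norm_e0 : ‖(vec2 1 0 : EuclideanSpace 𝕜 (Fin 2))‖ = 1 := by
  rw [norm_vec2]; simp

lemma norm_e1 : ‖(vec2 0 1 : EuclideanSpace 𝕜 (Fin 2))‖ = 1 := by
  rw [norm_vec2]; simp

lemma norm_Aform : ‖Aform 𝕜‖ = 1 := by
  refine le_antisymm ?_ ?_
  · refine ContinuousMultilinearMap.opNorm_le_bound zero_le_one ?_
    intro m
    rw [Aform_apply, one_mul, Fin.prod_univ_two]
    have h0 : ‖m 0‖ = Real.sqrt (‖m 0 0‖^2 + ‖m 0 1‖^2) := by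
      rw [EuclideanSpace.norm_eq]; rw [Fin.sum_univ_two]
    have h1 : ‖m 1‖ = Real.sqrt (‖m 1 0‖^2 + ‖m 1 1‖^2) := by
      rw [EuclideanSpace.norm_eq]; rw [Fin.sum_univ_two]
    rw [h0, h1]
    exact cs2 _ _ _ _
  · have h := (Aform 𝕜).le_opNorm ![vec2 1 0, vec2 1 0]
    rw [prod_norm_pair, norm_e0, Aform_apply] at h
    simpa [vec2_apply0, vec2_apply1] using h

/-- real version of key equality-case argument -/
lemma keyR (p q ar ai dr di : ℝ) (hp : 0 < p) (hq : 0 < q) (hpq : p^2 + q^2 = 1)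
    (ha : ar^2 + ai^2 ≤ 1) (hd : dr^2 + di^2 ≤ 1)
    (h : (p^2*ar - q^2*dr)^2 + (p^2*ai - q^2*di)^2 = 1) :
    (ar+dr)^2 + (ai+di)^2 ≤ 0 ∧ 1 ≤ ar^2 + ai^2 := by
  have hR2 : (ar*dr + ai*di)^2 ≤ (ar^2 + ai^2) * (dr^2 + di^2) := by
    nlinarith [sq_nonneg (ar*di - ai*dr)]
  have hprod : (ar^2 + ai^2) * (dr^2 + di^2) ≤ 1 := by
    nlinarith [sq_nonneg ar, sq_nonneg ai, sq_nonneg dr, sq_nonneg di]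
  have hR : -1 ≤ ar*dr + ai*di := by nlinarith [hR2, hprod]
  have heq : p^4*(ar^2+ai^2) + q^4*(dr^2+di^2) - 2*p^2*q^2*(ar*dr+ai*di) = 1 := by
    linear_combination h
  have hs : p^4*(1-(ar^2+ai^2)) + q^4*(1-(dr^2+di^2)) + 2*p^2*q^2*(1+(ar*dr+ai*di)) = 0 := by
    linear_combination -heq + (1 + p^2 + q^2) * hpq
  have hp4 : 0 < p^4 := by positivity
  have hq4 : 0 < q^4 := by positivity
  have hpq2 : 0 < 2*p^2*q^2 := by positivity
  have hA : ar^2+ai^2 = 1 := by nlinarith [hs]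
  have hD : dr^2+di^2 = 1 := by nlinarith [hs]
  have hRR : ar*dr+ai*di = -1 := by nlinarith [hs]
  constructor
  · nlinarith [hA, hD, hRR]
  · linarith [hA.ge]

lemma key (p q : ℝ) (hp : 0 < p) (hq : 0 < q) (hpq : p^2 + q^2 = 1)
    (a d : 𝕜) (ha : ‖a‖ ≤ 1) (hd : ‖d‖ ≤ 1)
    (h : ‖((p^2 : ℝ) : 𝕜) * a - ((q^2 : ℝ) : 𝕜) * d‖ = 1) : d = -a ∧ ‖a‖ = 1 := by
  set ar := RCLike.re a with har
  set ai := RCLike.im a with hai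
  set dr := RCLike.re d with hdr
  set di := RCLike.im d with hdi
  have hna : ‖a‖^2 = ar^2 + ai^2 := by rw [RCLike.norm_sq_eq_def]; ring
  have hnd : ‖d‖^2 = dr^2 + di^2 := by rw [RCLike.norm_sq_eq_def]; ring
  have ha' : ar^2 + ai^2 ≤ 1 := by
    rw [← hna]; nlinarith [norm_nonneg a]
  have hd' : dr^2 + di^2 ≤ 1 := by
    rw [← hnd]; nlinarith [norm_nonneg d]
  have hre : RCLike.re (((p^2 : ℝ) : 𝕜) * a - ((q^2 : ℝ) : 𝕜) * d) = p^2*ar - q^2*dr := by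
    simp only [map_sub, RCLike.mul_re, RCLike.mul_im, RCLike.ofReal_re, RCLike.ofReal_im]
    ring
  have him : RCLike.im (((p^2 : ℝ) : 𝕜) * a - ((q^2 : ℝ) : 𝕜) * d) = p^2*ai - q^2*di := by
    simp only [map_sub, RCLike.mul_re, RCLike.mul_im, RCLike.ofReal_re, RCLike.ofReal_im]
    ring
  have h2 : (p^2*ar - q^2*dr)^2 + (p^2*ai - q^2*di)^2 = 1 := by
    have := RCLike.norm_sq_eq_def (z := ((p^2 : ℝ) : 𝕜) * a - ((q^2 : ℝ) : 𝕜) * d)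
    rw [h, hre, him] at this
    nlinarith [this]
  obtain ⟨hzero, hone⟩ := keyR p q ar ai dr di hp hq hpq ha' hd' h2
  have hzr : ar + dr = 0 ∧ ai + di = 0 := by
    constructor <;> nlinarith [sq_nonneg (ar+dr), sq_nonneg (ai+di)]
  constructor
  · apply RCLike.ext
    · simp only [map_neg, ← har, ← hdr]; linarith [hzr.1]
    · simp only [map_neg, ← hai, ← hdi]; linarith [hzr.2]
  · have : ‖a‖^2 = 1 := by rw [hna]; linarith [ha', hone]
    nlinarith [norm_nonneg a, this]

lemma final_disj (a : 𝕜) (hna : ‖a‖ = 1) : 1 ≤ ‖a - 1‖ ∨ 1 ≤ ‖a + 1‖ := by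
  by_contra hcon
  push_neg at hcon
  obtain ⟨h1, h2⟩ := hcon
  have e1 : ‖a - 1‖^2 = (RCLike.re a - 1)^2 + (RCLike.im a)^2 := by
    rw [RCLike.norm_sq_eq_def]; simp; ring
  have e2 : ‖a + 1‖^2 = (RCLike.re a + 1)^2 + (RCLike.im a)^2 := by
    rw [RCLike.norm_sq_eq_def]; simp; ring
  have e3 : ‖a‖^2 = (RCLike.re a)^2 + (RCLike.im a)^2 := by
    rw [RCLike.norm_sq_eq_def]; ring
  rw [hna] at e3
  nlinarith [norm_nonneg (a-1), norm_nonneg (a+1), e1, e2, e3, h1, h2]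

end BPBAux

end BPBAux

open BPBAux in
/-- The pair `(ℓ₂², 𝕜)` fails the bilinear symmetric Bishop–Phelps–Bollobás
point property: there is `ε > 0` such that for every `η > 0` there are a norm-one symmetric
continuous bilinear form `A` on `ℓ₂²` and unit vectors `x, y` with `|A(x,y)| > 1 − η`, such
that every norm-one symmetric continuous bilinear form `B` with `|B(x,y)| = 1` satisfies
`‖B − A‖ ≥ ε`. -/
theorem stmt_10 (𝕜 : Type*) [RCLike 𝕜] :
    ∃ ε > (0 : ℝ), ∀ η > (0 : ℝ),
      ∃ (A : ContinuousMultilinearMap 𝕜 (fun _ : Fin 2 => EuclideanSpace 𝕜 (Fin 2)) 𝕜)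
        (x y : EuclideanSpace 𝕜 (Fin 2)),
        (∀ u v : EuclideanSpace 𝕜 (Fin 2), A ![u, v] = A ![v, u]) ∧
        ‖A‖ = 1 ∧ ‖x‖ = 1 ∧ ‖y‖ = 1 ∧ ‖A ![x, y]‖ > 1 - η ∧
        ∀ B : ContinuousMultilinearMap 𝕜 (fun _ : Fin 2 => EuclideanSpace 𝕜 (Fin 2)) 𝕜,
          (∀ u v : EuclideanSpace 𝕜 (Fin 2), B ![u, v] = B ![v, u]) →
          ‖B‖ = 1 → ‖B ![x, y]‖ = 1 → ε ≤ ‖B - A‖ := by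
  refine ⟨1, one_pos, ?_⟩
  intro η hη
  -- parameters
  set s : ℝ := min η 1 / 4 with hs_def
  have hs_pos : 0 < s := by
    have : 0 < min η 1 := lt_min hη one_pos
    positivity
  have hs_le : s ≤ 1/4 := by
    have : min η 1 ≤ 1 := min_le_right _ _
    rw [hs_def]; linarith
  have h2s : 2*s < η := by
    rcases le_or_gt η 1 with hle | hlt
    · have : min η 1 = η := min_eq_left hle
      rw [hs_def, this]; linarith
    · have : min η 1 = 1 := min_eq_right hlt.le
      rw [hs_def, this]; linarith
  set p : ℝ := Real.sqrt (1 - s) with hp_def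
  set q : ℝ := Real.sqrt s with hq_def
  have hp2 : p^2 = 1 - s := Real.sq_sqrt (by linarith)
  have hq2 : q^2 = s := Real.sq_sqrt hs_pos.le
  have hp_pos : 0 < p := Real.sqrt_pos.mpr (by linarith)
  have hq_pos : 0 < q := Real.sqrt_pos.mpr hs_pos
  have hpq : p^2 + q^2 = 1 := by rw [hp2, hq2]; ring
  set x : EuclideanSpace 𝕜 (Fin 2) := vec2 (p : 𝕜) (q : 𝕜) with hx_def
  set y : EuclideanSpace 𝕜 (Fin 2) := vec2 (p : 𝕜) (-(q : 𝕜)) with hy_def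
  have hnx : ‖x‖ = 1 := by
    rw [hx_def, norm_vec2]
    rw [RCLike.norm_ofReal, RCLike.norm_ofReal, abs_of_pos hp_pos, abs_of_pos hq_pos, hp2, hq2]
    simp [show (1:ℝ) - s + s = 1 by ring]
  have hny : ‖y‖ = 1 := by
    rw [hy_def, norm_vec2, norm_neg]
    rw [RCLike.norm_ofReal, RCLike.norm_ofReal, abs_of_pos hp_pos, abs_of_pos hq_pos, hp2, hq2]
    simp [show (1:ℝ) - s + s = 1 by ring]
  refine ⟨Aform 𝕜, x, y, ?_, norm_Aform, hnx, hny, ?_, ?_⟩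
  · intro u v
    rw [Aform_apply, Aform_apply]
    simp only [Matrix.cons_val_zero, Matrix.cons_val_one, Matrix.head_cons]
    ring
  · -- ‖A ![x,y]‖ > 1 - η
    have : Aform 𝕜 ![x, y] = ((1 - 2*s : ℝ) : 𝕜) := by
      rw [Aform_apply]
      simp only [Matrix.cons_val_zero, Matrix.cons_val_one, Matrix.head_cons, hx_def, hy_def,
        vec2_apply0, vec2_apply1]
      have : ((p:𝕜) * (p:𝕜) + (q:𝕜) * (-(q:𝕜))) = (((p^2 - q^2 : ℝ)) : 𝕜) := by
        push_cast; ring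
      rw [this]
      congr 1
      rw [hp2, hq2]
      ring
    rw [this, RCLike.norm_ofReal, abs_of_pos (by linarith : (0:ℝ) < 1 - 2*s)]
    linarith
  · -- main estimate
    intro B hBsym hBnorm hBxy
    set e0 : EuclideanSpace 𝕜 (Fin 2) := vec2 1 0 with he0
    set e1 : EuclideanSpace 𝕜 (Fin 2) := vec2 0 1 with he1
    set a : 𝕜 := B ![e0, e0] with ha_def
    set d : 𝕜 := B ![e1, e1] with hd_def
    have hcross : B ![e0, e1] = B ![e1, e0] := hBsym e0 e1
    -- value of B at (x,y)
    have hBval : B ![x, y] = ((p^2 : ℝ) : 𝕜) * a - ((q^2 : ℝ) : 𝕜) * d := by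
      rw [map_pair B x y]
      simp only [hx_def, hy_def, vec2_apply0, vec2_apply1, ← he0, ← he1, ← ha_def, ← hd_def,
        hcross]
      push_cast
      ring
    -- norm bounds on diagonal entries
    have hbnd : ∀ u v : EuclideanSpace 𝕜 (Fin 2), ‖u‖ = 1 → ‖v‖ = 1 → ‖B ![u, v]‖ ≤ 1 := by
      intro u v hu hv
      have h := B.le_opNorm ![u, v]
      rw [prod_norm_pair, hu, hv, hBnorm] at h
      simpa using h
    have hne0 : ‖e0‖ = 1 := norm_e0
    have hne1 : ‖e1‖ = 1 := norm_e1
    have ha1 : ‖a‖ ≤ 1 := by rw [ha_def]; exact hbnd _ _ hne0 hne0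
    have hd1 : ‖d‖ ≤ 1 := by rw [hd_def]; exact hbnd _ _ hne1 hne1
    have hkey : d = -a ∧ ‖a‖ = 1 := by
      apply key p q hp_pos hq_pos hpq a d ha1 hd1
      rw [← hBval]; exact hBxy
    obtain ⟨hda, hna1⟩ := hkey
    -- lower bounds on ‖B - A‖
    have hsub : ∀ u v : EuclideanSpace 𝕜 (Fin 2), ‖u‖ = 1 → ‖v‖ = 1 →
        ‖(B - Aform 𝕜) ![u, v]‖ ≤ ‖B - Aform 𝕜‖ := by
      intro u v hu hv
      have h := (B - Aform 𝕜).le_opNorm ![u, v]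
      rw [prod_norm_pair, hu, hv] at h
      simpa using h
    have hv00 : (B - Aform 𝕜) ![e0, e0] = a - 1 := by
      rw [ContinuousMultilinearMap.sub_apply, Aform_apply, ← ha_def]
      simp [he0, vec2_apply0, vec2_apply1]
    have hv11 : (B - Aform 𝕜) ![e1, e1] = -a - 1 := by
      rw [ContinuousMultilinearMap.sub_apply, Aform_apply, ← hd_def, hda]
      simp [he1, vec2_apply0, vec2_apply1]
    rcases final_disj a hna1 with hc | hc
    · calc (1:ℝ) ≤ ‖a - 1‖ := hc
        _ = ‖(B - Aform 𝕜) ![e0, e0]‖ := by rw [hv00]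
        _ ≤ ‖B - Aform 𝕜‖ := hsub _ _ hne0 hne0
    · calc (1:ℝ) ≤ ‖a + 1‖ := hc
        _ = ‖(B - Aform 𝕜) ![e1, e1]‖ := by rw [hv11, show -a - 1 = -(a+1) by ring, norm_neg]
        _ ≤ ‖B - Aform 𝕜‖ := hsub _ _ hne1 hne1
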